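/- arXiv:0704.1431 — 4 statements merged into one kernel-verified Lean document; each statement's English description precedes it below -/
import Mathlib

section
/- Let G be a finite simple graph and let F be a finite simple graph on vertex set V(F) that is a Schreier graph with connecting set S: S is a set of permutations of V(F) with S = S⁻¹ and A(F) = Σ_{s∈S} P(s). Let φ be a voltage assignment on G with values in Aut(F), and let Γ be a subgroup of the symmetric group on V(F) containing all values of φ and all elements of S. Let ρ₁, …, ρ_ℓ be group homomorphisms from Γ to the invertible complex f_i×f_i matrices, let m₁, …, m_ℓ be nonnegative integers with Σᵢ mᵢfᵢ = |V(F)|, and suppose there is an invertible complex V(F)×V(F) matrix M such that for every γ ∈ Γ, M⁻¹P(γ)M = ⊕_{i=1}^{ℓ} (I_{mᵢ} ⊗ ρᵢ(γ)). Then for all complex λ, μ: F_{G×^φF}(λ,μ) = ∏_{i=1}^{ℓ} det[ I_{fᵢ} ⊗ ((λ + μ|S|)·I_{V(G)} + μ·D(G)) − Σ_{γ∈Γ} ρᵢ(γ) ⊗ A(G_{φ,γ}) − (Σ_{s∈S} ρᵢ(s)) ⊗ I_{V(G)} ]^{mᵢ}. -/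
open Matrix BigOperators Kronecker
open scoped Classical

noncomputable section

variable {α β : Type*}

def adjM [Fintype α] (G : SimpleGraph α) : Matrix α α ℂ :=
  Matrix.of fun u v => if G.Adj u v then (1 : ℂ) else 0

def degM [Fintype α] (G : SimpleGraph α) : Matrix α α ℂ :=
  Matrix.diagonal fun v => ((G.neighborSet v).ncard : ℂ)

def Fpoly [Fintype α] (G : SimpleGraph α) (lam mu : ℂ) : ℂ :=
  (lam • (1 : Matrix α α ℂ) - (adjM G - mu • degM G)).det

def permM (γ : Equiv.Perm β) : Matrix β β ℂ :=
  Matrix.of fun v w => if γ v = w then (1 : ℂ) else 0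

def voltM [Fintype α] (G : SimpleGraph α) (φ : α → α → Equiv.Perm β) (γ : Equiv.Perm β) :
    Matrix α α ℂ :=
  Matrix.of fun u₁ u₂ => if G.Adj u₁ u₂ ∧ φ u₁ u₂ = γ then (1 : ℂ) else 0

def autPerm (F : SimpleGraph β) : Subgroup (Equiv.Perm β) where
  carrier := {γ | ∀ a b, F.Adj (γ a) (γ b) ↔ F.Adj a b}
  one_mem' := by intro a b; simp
  mul_mem' := by intro γ δ hγ hδ a b; simp [Equiv.Perm.mul_apply, hγ _ _, hδ _ _]
  inv_mem' := by intro γ hγ a b; simpa using (hγ (γ⁻¹ a) (γ⁻¹ b)).symm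

def bundle (G : SimpleGraph α) (F : SimpleGraph β) (φ : α → α → Equiv.Perm β)
    (hsym : ∀ u₁ u₂, G.Adj u₁ u₂ → φ u₂ u₁ = (φ u₁ u₂)⁻¹) : SimpleGraph (β × α) where
  Adj p q := (G.Adj p.2 q.2 ∧ q.1 = φ p.2 q.2 p.1) ∨ (p.2 = q.2 ∧ F.Adj p.1 q.1)
  symm := by
    constructor
    rintro ⟨v₁, u₁⟩ ⟨v₂, u₂⟩ hadj
    dsimp only at hadj ⊢
    rcases hadj with ⟨h, rfl⟩ | ⟨rfl, h⟩
    · left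
      refine ⟨h.symm, ?_⟩
      rw [hsym _ _ h]
      simp
    · right
      exact ⟨rfl, h.symm⟩
  loopless := by
    constructor
    rintro ⟨v, u⟩ hadj
    dsimp only at hadj
    rcases hadj with ⟨h, _⟩ | ⟨_, h⟩
    · exact G.loopless.irrefl u h
    · exact F.loopless.irrefl v h

def dsum [Fintype α] (B : β → Matrix α α ℂ) : Matrix (β × α) (β × α) ℂ :=
  Matrix.of fun p q => if p.1 = q.1 then B p.1 p.2 q.2 else 0

def bigE {ℓ : ℕ} {f m : Fin ℓ → ℕ} (e : β ≃ Σ i : Fin ℓ, Fin (m i) × Fin (f i)) (α : Type*) :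
    β × α ≃ Σ i : Fin ℓ, Fin (m i) × (Fin (f i) × α) :=
  (e.prodCongr (Equiv.refl α)).trans
    ((Equiv.sigmaProdDistrib _ _).trans (Equiv.sigmaCongrRight fun _ => Equiv.prodAssoc _ _ _))




section AuxLemmas

variable {α β : Type*}

lemma permM_one : permM (1 : Equiv.Perm β) = 1 := by
  ext v w; simp [permM, Matrix.one_apply]
  congr

lemma ncard_neighborSet_eq_sum [Fintype α] (H : SimpleGraph α) (v : α) :
    ((H.neighborSet v).ncard : ℂ) = ∑ w, adjM H v w := by
  classical
  rw [Set.ncard_eq_toFinset_card']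
  simp [adjM, Finset.sum_boole, SimpleGraph.neighborSet, Set.toFinset_setOf]
  congr 1; ext; exact (@Set.mem_toFinset α {w | H.Adj v w} (_) _).trans (by simp)

lemma degF_eq [Fintype β] (F : SimpleGraph β) (S : Finset (Equiv.Perm β))
    (hSchreier : adjM F = ∑ s ∈ S, permM s) (v : β) :
    ((F.neighborSet v).ncard : ℂ) = S.card := by
  rw [ncard_neighborSet_eq_sum, hSchreier]
  simp only [Matrix.sum_apply]
  rw [Finset.sum_comm]
  simp [permM]

lemma kron_sum_right {ι p q : Type*} [Fintype p] [Fintype q] (s : Finset ι)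
    (A : Matrix p p ℂ) (B : ι → Matrix q q ℂ) :
    A ⊗ₖ (∑ i ∈ s, B i) = ∑ i ∈ s, A ⊗ₖ B i := by
  ext ⟨a, b⟩ ⟨c, d⟩
  simp [Matrix.sum_apply, Finset.mul_sum]

lemma kron_sum_left {ι p q : Type*} [Fintype p] [Fintype q] (s : Finset ι)
    (A : ι → Matrix p p ℂ) (B : Matrix q q ℂ) :
    (∑ i ∈ s, A i) ⊗ₖ B = ∑ i ∈ s, A i ⊗ₖ B := by
  ext ⟨a, b⟩ ⟨c, d⟩
  simp [Matrix.sum_apply, Finset.sum_mul]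

lemma kron_sub_right {p q : Type*} [Fintype p] [Fintype q]
    (A : Matrix p p ℂ) (B C : Matrix q q ℂ) :
    A ⊗ₖ (B - C) = A ⊗ₖ B - A ⊗ₖ C := by
  ext ⟨a, b⟩ ⟨c, d⟩
  simp [mul_sub]

def sigmaFiberEquiv' {ι : Type*} {τ : ι → Type*} (k : ι) : {a : Σ i, τ i // a.1 = k} ≃ τ k where
  toFun a := a.2 ▸ a.1.2
  invFun x := ⟨⟨k, x⟩, rfl⟩
  left_inv := by rintro ⟨⟨i, x⟩, rfl⟩; rfl
  right_inv x := rfl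

lemma det_blockDiagonal'' {ℓ : ℕ} {τ : Fin ℓ → Type*} [∀ i, Fintype (τ i)] [∀ i, DecidableEq (τ i)]
    (B : ∀ i, Matrix (τ i) (τ i) ℂ) :
    (Matrix.blockDiagonal' B).det = ∏ i, (B i).det := by
  have hbt : (Matrix.blockDiagonal' B).BlockTriangular Sigma.fst := by
    intro i j h
    exact Matrix.blockDiagonal'_apply_ne _ _ _ (ne_of_lt h).symm
  rw [hbt.det_fintype]
  refine Finset.prod_congr rfl fun k _ => ?_
  have : (Matrix.blockDiagonal' B).toSquareBlock Sigma.fst k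
      = (B k).submatrix (sigmaFiberEquiv' k) (sigmaFiberEquiv' k) := by
    ext a b
    obtain ⟨⟨i, x⟩, hi⟩ := a
    obtain ⟨⟨j, y⟩, hj⟩ := b
    dsimp only at hi hj
    subst hi; subst hj
    simp [Matrix.toSquareBlock_def, sigmaFiberEquiv', Matrix.blockDiagonal'_apply_eq]
  rw [this, Matrix.det_submatrix_equiv_self]

lemma blockDiagonal'_sum' {ι' : Type*} {ℓ : ℕ} {τ : Fin ℓ → Type*} (s : Finset ι')
    (g : ι' → ∀ i, Matrix (τ i) (τ i) ℂ) :
    ∑ j ∈ s, Matrix.blockDiagonal' (g j) = Matrix.blockDiagonal' (fun i => ∑ j ∈ s, g j i) := by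
  ext ⟨i, x⟩ ⟨i', y⟩
  rw [Matrix.sum_apply]
  rcases eq_or_ne i i' with rfl | h
  · simp [Matrix.blockDiagonal'_apply_eq, Matrix.sum_apply]
  · simp [Matrix.blockDiagonal'_apply_ne _ _ _ h]

lemma bigE_symm {ℓ : ℕ} {f m : Fin ℓ → ℕ} (e : β ≃ Σ i : Fin ℓ, Fin (m i) × Fin (f i))
    {α : Type*} (i : Fin ℓ) (a : Fin (m i)) (b : Fin (f i)) (u : α) :
    (bigE e α).symm ⟨i, a, b, u⟩ = (e.symm ⟨i, (a, b)⟩, u) := rfl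

lemma reindex_kron [Fintype α] {ℓ : ℕ} {f m : Fin ℓ → ℕ}
    (e : β ≃ Σ i : Fin ℓ, Fin (m i) × Fin (f i)) [Fintype β]
    (P : Matrix β β ℂ) (R : ∀ i, Matrix (Fin (f i)) (Fin (f i)) ℂ)
    (h : Matrix.reindex e e P
      = Matrix.blockDiagonal' fun i => (1 : Matrix (Fin (m i)) (Fin (m i)) ℂ) ⊗ₖ R i)
    (Z : Matrix α α ℂ) :
    Matrix.reindex (bigE e α) (bigE e α) (P ⊗ₖ Z)
      = Matrix.blockDiagonal' fun i =>
          (1 : Matrix (Fin (m i)) (Fin (m i)) ℂ) ⊗ₖ (R i ⊗ₖ Z) := by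
  have h' : ∀ x y, P (e.symm x) (e.symm y)
      = Matrix.blockDiagonal' (fun i => (1 : Matrix (Fin (m i)) (Fin (m i)) ℂ) ⊗ₖ R i) x y := by
    intro x y
    rw [← h]; simp [Matrix.reindex_apply]
  ext ⟨i, a, b, u⟩ ⟨j, a', b', u'⟩
  rw [Matrix.reindex_apply, Matrix.submatrix_apply, bigE_symm, bigE_symm]
  show P (e.symm ⟨i, (a, b)⟩) (e.symm ⟨j, (a', b')⟩) * Z u u' = _
  rw [h' ⟨i, (a, b)⟩ ⟨j, (a', b')⟩]
  rcases eq_or_ne i j with rfl | hij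
  · rw [Matrix.blockDiagonal'_apply_eq, Matrix.blockDiagonal'_apply_eq]
    show (1 : Matrix (Fin (m i)) (Fin (m i)) ℂ) a a' * R i b b' * Z u u'
      = (1 : Matrix (Fin (m i)) (Fin (m i)) ℂ) a a' * (R i b b' * Z u u')
    ring
  · rw [Matrix.blockDiagonal'_apply_ne _ _ _ hij, Matrix.blockDiagonal'_apply_ne _ _ _ hij,
      zero_mul]

lemma sumGamma_apply [Fintype α] [Fintype β] (G : SimpleGraph α)
    (φ : α → α → Equiv.Perm β) (Γ : Subgroup (Equiv.Perm β))
    (hφΓ : ∀ u₁ u₂, G.Adj u₁ u₂ → φ u₁ u₂ ∈ Γ) (v₁ : β) (u₁ : α) (v₂ : β) (u₂ : α) :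
    (∑ γ : Γ, permM (γ : Equiv.Perm β) ⊗ₖ voltM G φ (γ : Equiv.Perm β)) (v₁, u₁) (v₂, u₂)
      = if G.Adj u₁ u₂ ∧ φ u₁ u₂ v₁ = v₂ then 1 else 0 := by
  rw [Matrix.sum_apply]
  by_cases h : G.Adj u₁ u₂
  · rw [Finset.sum_eq_single (⟨φ u₁ u₂, hφΓ _ _ h⟩ : Γ)]
    · simp [permM, voltM, h, Matrix.kroneckerMap_apply]
    · intro γ _ hγ
      have hne : ¬ (φ u₁ u₂ = (γ : Equiv.Perm β)) := fun hh => hγ (Subtype.ext hh.symm)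
      simp [permM, voltM, Matrix.kroneckerMap_apply, hne]
    · intro hmem; exact absurd (Finset.mem_univ _) hmem
  · simp [voltM, h, Matrix.kroneckerMap_apply, permM]

lemma adjM_bundle_apply [Fintype α] [Fintype β] (G : SimpleGraph α) (F : SimpleGraph β)
    (φ : α → α → Equiv.Perm β)
    (hsym : ∀ u₁ u₂, G.Adj u₁ u₂ → φ u₂ u₁ = (φ u₁ u₂)⁻¹) (v : β) (u : α) (w : β) (u' : α) :
    adjM (bundle G F φ hsym) (v, u) (w, u')
      = (if G.Adj u u' ∧ w = φ u u' v then (1 : ℂ) else 0)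
        + (if u = u' ∧ F.Adj v w then (1 : ℂ) else 0) := by
  have hadj : (bundle G F φ hsym).Adj (v, u) (w, u')
      ↔ (G.Adj u u' ∧ w = φ u u' v) ∨ (u = u' ∧ F.Adj v w) := Iff.rfl
  simp only [adjM, Matrix.of_apply]
  by_cases hb : (bundle G F φ hsym).Adj (v, u) (w, u')
  · rw [if_pos hb]
    rcases hadj.mp hb with h1 | h2
    · have h2 : ¬ (u = u' ∧ F.Adj v w) := fun h2 => G.loopless.irrefl u' (h2.1 ▸ h1.1)
      rw [if_pos h1, if_neg h2, add_zero]
    · have h1 : ¬ (G.Adj u u' ∧ w = φ u u' v) := fun h1 => G.loopless.irrefl u' (h2.1 ▸ h1.1)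
      rw [if_neg h1, if_pos h2, zero_add]
  · rw [if_neg hb, if_neg (fun h1 => hb (hadj.mpr (Or.inl h1))),
      if_neg (fun h2 => hb (hadj.mpr (Or.inr h2))), add_zero]

lemma deg_bundle [Fintype α] [Fintype β] (G : SimpleGraph α) (F : SimpleGraph β)
    (S : Finset (Equiv.Perm β)) (hSchreier : adjM F = ∑ s ∈ S, permM s)
    (φ : α → α → Equiv.Perm β)
    (hsym : ∀ u₁ u₂, G.Adj u₁ u₂ → φ u₂ u₁ = (φ u₁ u₂)⁻¹) (v : β) (u : α) :
    (((bundle G F φ hsym).neighborSet (v, u)).ncard : ℂ)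
      = ((G.neighborSet u).ncard : ℂ) + S.card := by
  rw [ncard_neighborSet_eq_sum]
  rw [Fintype.sum_prod_type]
  simp only [adjM_bundle_apply, Finset.sum_add_distrib]
  congr 1
  · rw [Finset.sum_comm, ncard_neighborSet_eq_sum]
    refine Finset.sum_congr rfl fun u' _ => ?_
    simp only [ite_and]
    by_cases ha : G.Adj u u' <;> simp [ha, adjM]
  · rw [← degF_eq F S hSchreier v, ncard_neighborSet_eq_sum]
    refine Finset.sum_congr rfl fun w _ => ?_
    simp [adjM, ite_and]

lemma matrix_decomp [Fintype α] [Fintype β] (G : SimpleGraph α) (F : SimpleGraph β)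
    (S : Finset (Equiv.Perm β)) (hSchreier : adjM F = ∑ s ∈ S, permM s)
    (φ : α → α → Equiv.Perm β)
    (hsym : ∀ u₁ u₂, G.Adj u₁ u₂ → φ u₂ u₁ = (φ u₁ u₂)⁻¹)
    (Γ : Subgroup (Equiv.Perm β))
    (hφΓ : ∀ u₁ u₂, G.Adj u₁ u₂ → φ u₁ u₂ ∈ Γ) (lam μ : ℂ) :
    Fpoly (bundle G F φ hsym) lam μ
    = Matrix.det ((1 : Matrix β β ℂ) ⊗ₖ ((lam + μ * S.card) • (1 : Matrix α α ℂ) + μ • degM G)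
      - (∑ γ : Γ, permM (γ : Equiv.Perm β) ⊗ₖ voltM G φ (γ : Equiv.Perm β))
      - (∑ s ∈ S, permM s) ⊗ₖ (1 : Matrix α α ℂ)) := by
  unfold Fpoly
  congr 1
  ext ⟨v₁, u₁⟩ ⟨v₂, u₂⟩
  have hS : (∑ s ∈ S, permM s) v₁ v₂ = if F.Adj v₁ v₂ then (1 : ℂ) else 0 := by
    rw [← hSchreier]; rfl
  simp only [Matrix.sub_apply, Matrix.add_apply, Matrix.smul_apply, smul_eq_mul,
    Matrix.kroneckerMap_apply, sumGamma_apply G φ Γ hφΓ, adjM_bundle_apply, hS,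
    degM, Matrix.diagonal, Matrix.of_apply, Prod.mk.injEq,
    deg_bundle G F S hSchreier φ hsym]
  by_cases hu : u₁ = u₂
  · subst hu
    by_cases hv : v₁ = v₂
    · subst hv
      have h1 : ¬ G.Adj u₁ u₁ := G.loopless.irrefl u₁
      have h2 : ¬ F.Adj v₁ v₁ := F.loopless.irrefl v₁
      simp [Matrix.one_apply, h1, h2]
      ring
    · have h1 : ¬ G.Adj u₁ u₁ := G.loopless.irrefl u₁
      simp [Matrix.one_apply, h1, hv]
  · simp only [Matrix.one_apply, if_neg hu]
    by_cases hv : v₁ = v₂ <;>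
      simp [hv, hu, eq_comm, mul_comm]

end AuxLemmas

set_option maxHeartbeats 2000000 in
theorem genCharPoly_of_schreier_bundle
    {α β : Type*} [Fintype α] [Fintype β]
    (G : SimpleGraph α) (F : SimpleGraph β)
    (S : Finset (Equiv.Perm β)) (hSinv : ∀ s ∈ S, s⁻¹ ∈ S)
    (hSchreier : adjM F = ∑ s ∈ S, permM s)
    (φ : α → α → Equiv.Perm β)
    (hsym : ∀ u₁ u₂, G.Adj u₁ u₂ → φ u₂ u₁ = (φ u₁ u₂)⁻¹)
    (hAut : ∀ u₁ u₂, G.Adj u₁ u₂ → φ u₁ u₂ ∈ autPerm F)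
    (Γ : Subgroup (Equiv.Perm β))
    (hφΓ : ∀ u₁ u₂, G.Adj u₁ u₂ → φ u₁ u₂ ∈ Γ)
    (hSΓ : ∀ s ∈ S, s ∈ Γ)
    (ℓ : ℕ) (f m : Fin ℓ → ℕ) (ρ : ∀ i : Fin ℓ, Γ →* GL (Fin (f i)) ℂ)
    (hsum : ∑ i, m i * f i = Fintype.card β)
    (e : β ≃ Σ i : Fin ℓ, Fin (m i) × Fin (f i))
    (M : Matrix β β ℂ) (hM : IsUnit M.det)
    (hP : ∀ γ : Γ, Matrix.reindex e e (M⁻¹ * permM (γ : Equiv.Perm β) * M)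
        = Matrix.blockDiagonal' fun i =>
            (1 : Matrix (Fin (m i)) (Fin (m i)) ℂ)
              ⊗ₖ (ρ i γ : Matrix (Fin (f i)) (Fin (f i)) ℂ))
    (lam μ : ℂ) :
    Fpoly (bundle G F φ hsym) lam μ
      = ∏ i : Fin ℓ,
          (Matrix.det
            ((1 : Matrix (Fin (f i)) (Fin (f i)) ℂ)
                ⊗ₖ ((lam + μ * (S.card : ℂ)) • (1 : Matrix α α ℂ) + μ • degM G)
              - (∑ γ : Γ, (ρ i γ : Matrix (Fin (f i)) (Fin (f i)) ℂ)
                  ⊗ₖ voltM G φ (γ : Equiv.Perm β))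
              - (∑ s ∈ S.attach,
                  (ρ i ⟨(s : Equiv.Perm β), hSΓ s s.2⟩
                    : Matrix (Fin (f i)) (Fin (f i)) ℂ))
                ⊗ₖ (1 : Matrix α α ℂ))) ^ (m i) := by
  classical
  have hMunit : IsUnit (M ⊗ₖ (1 : Matrix α α ℂ)) := by
    rw [Matrix.isUnit_iff_isUnit_det, Matrix.det_kronecker, Matrix.det_one, one_pow, mul_one]
    exact hM.pow _
  have hterm : ∀ (P : Matrix β β ℂ) (Z : Matrix α α ℂ),
      (M⁻¹ ⊗ₖ (1 : Matrix α α ℂ)) * (P ⊗ₖ Z) * (M ⊗ₖ (1 : Matrix α α ℂ))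
        = (M⁻¹ * P * M) ⊗ₖ Z := by
    intro P Z
    rw [← Matrix.mul_kronecker_mul, ← Matrix.mul_kronecker_mul, Matrix.one_mul, Matrix.mul_one]
  have h1 : Matrix.reindex e e (1 : Matrix β β ℂ)
      = Matrix.blockDiagonal' fun i =>
          (1 : Matrix (Fin (m i)) (Fin (m i)) ℂ) ⊗ₖ (1 : Matrix (Fin (f i)) (Fin (f i)) ℂ) := by
    have := hP 1
    simpa [permM_one, Matrix.mul_one, Matrix.nonsing_inv_mul M hM, _root_.map_one] using this
  rw [matrix_decomp G F S hSchreier φ hsym Γ hφΓ lam μ,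
    ← Finset.sum_attach S (fun s => permM s), kron_sum_left,
    ← Matrix.det_conj' hMunit, Matrix.inv_kronecker, inv_one]
  simp only [Matrix.sub_mul, Matrix.mul_sub, Finset.sum_mul, Finset.mul_sum, hterm,
    Matrix.mul_one, Matrix.nonsing_inv_mul M hM]
  rw [← Matrix.det_reindex_self (bigE e α)]
  have hre_sub : ∀ (A B : Matrix (β × α) (β × α) ℂ),
      Matrix.reindex (bigE e α) (bigE e α) (A - B)
        = Matrix.reindex (bigE e α) (bigE e α) A - Matrix.reindex (bigE e α) (bigE e α) B := by
    intro A B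
    simp [Matrix.reindex_apply, Matrix.submatrix_sub]
  rw [hre_sub, hre_sub,
    reindex_kron e (1 : Matrix β β ℂ)
      (fun i => (1 : Matrix (Fin (f i)) (Fin (f i)) ℂ)) h1
      ((lam + μ * (S.card : ℂ)) • (1 : Matrix α α ℂ) + μ • degM G)]
  have hg : Matrix.reindex (bigE e α) (bigE e α)
        (∑ γ : Γ, (M⁻¹ * permM (γ : Equiv.Perm β) * M) ⊗ₖ voltM G φ (γ : Equiv.Perm β))
      = ∑ γ : Γ, Matrix.blockDiagonal' (fun i =>
          (1 : Matrix (Fin (m i)) (Fin (m i)) ℂ)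
            ⊗ₖ ((ρ i γ : Matrix (Fin (f i)) (Fin (f i)) ℂ) ⊗ₖ voltM G φ (γ : Equiv.Perm β))) := by
    have h0 : Matrix.reindex (bigE e α) (bigE e α)
          (∑ γ : Γ, (M⁻¹ * permM (γ : Equiv.Perm β) * M) ⊗ₖ voltM G φ (γ : Equiv.Perm β))
        = ∑ γ : Γ, Matrix.reindex (bigE e α) (bigE e α)
            ((M⁻¹ * permM (γ : Equiv.Perm β) * M) ⊗ₖ voltM G φ (γ : Equiv.Perm β)) := by
      ext x y
      simp [Matrix.reindex_apply, Matrix.sum_apply]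
    rw [h0]
    exact Finset.sum_congr rfl fun γ _ => reindex_kron e _ _ (hP γ) _
  have hs : Matrix.reindex (bigE e α) (bigE e α)
        (∑ s ∈ S.attach, (M⁻¹ * permM (s : Equiv.Perm β) * M) ⊗ₖ (1 : Matrix α α ℂ))
      = ∑ s ∈ S.attach, Matrix.blockDiagonal' (fun i =>
          (1 : Matrix (Fin (m i)) (Fin (m i)) ℂ)
            ⊗ₖ ((ρ i ⟨(s : Equiv.Perm β), hSΓ s s.2⟩
                : Matrix (Fin (f i)) (Fin (f i)) ℂ) ⊗ₖ (1 : Matrix α α ℂ))) := by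
    have h0 : Matrix.reindex (bigE e α) (bigE e α)
          (∑ s ∈ S.attach, (M⁻¹ * permM (s : Equiv.Perm β) * M) ⊗ₖ (1 : Matrix α α ℂ))
        = ∑ s ∈ S.attach, Matrix.reindex (bigE e α) (bigE e α)
            ((M⁻¹ * permM (s : Equiv.Perm β) * M) ⊗ₖ (1 : Matrix α α ℂ)) := by
      ext x y
      simp [Matrix.reindex_apply, Matrix.sum_apply]
    rw [h0]
    exact Finset.sum_congr rfl fun s _ =>
      reindex_kron e _ _ (hP ⟨(s : Equiv.Perm β), hSΓ s s.2⟩) _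
  rw [hg, hs, blockDiagonal'_sum', blockDiagonal'_sum',
    ← Matrix.blockDiagonal'_sub, ← Matrix.blockDiagonal'_sub, det_blockDiagonal'']
  refine Finset.prod_congr rfl fun i _ => ?_
  simp only [Pi.sub_apply]
  have hblock : (1 : Matrix (Fin (m i)) (Fin (m i)) ℂ)
        ⊗ₖ ((1 : Matrix (Fin (f i)) (Fin (f i)) ℂ)
              ⊗ₖ ((lam + μ * (S.card : ℂ)) • (1 : Matrix α α ℂ) + μ • degM G)
            - (∑ γ : Γ, (ρ i γ : Matrix (Fin (f i)) (Fin (f i)) ℂ)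
                ⊗ₖ voltM G φ (γ : Equiv.Perm β))
            - (∑ s ∈ S.attach,
                (ρ i ⟨(s : Equiv.Perm β), hSΓ s s.2⟩
                  : Matrix (Fin (f i)) (Fin (f i)) ℂ)) ⊗ₖ (1 : Matrix α α ℂ))
      = (1 : Matrix (Fin (m i)) (Fin (m i)) ℂ)
          ⊗ₖ ((1 : Matrix (Fin (f i)) (Fin (f i)) ℂ)
              ⊗ₖ ((lam + μ * (S.card : ℂ)) • (1 : Matrix α α ℂ) + μ • degM G))
        - (∑ γ : Γ, (1 : Matrix (Fin (m i)) (Fin (m i)) ℂ)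
            ⊗ₖ ((ρ i γ : Matrix (Fin (f i)) (Fin (f i)) ℂ)
              ⊗ₖ voltM G φ (γ : Equiv.Perm β)))
        - (∑ s ∈ S.attach, (1 : Matrix (Fin (m i)) (Fin (m i)) ℂ)
            ⊗ₖ ((ρ i ⟨(s : Equiv.Perm β), hSΓ s s.2⟩
                  : Matrix (Fin (f i)) (Fin (f i)) ℂ) ⊗ₖ (1 : Matrix α α ℂ))) := by
    rw [kron_sub_right, kron_sub_right, kron_sum_right, kron_sum_left, kron_sum_right]
  rw [← hblock, Matrix.det_kronecker, Matrix.det_one, one_pow, one_mul, Fintype.card_fin]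


end
end

section
/- Let G be a finite simple graph and F a finite simple graph that is regular of degree r. Let φ be a voltage assignment on G whose values lie in an abelian subgroup Γ of Aut(F), and suppose M is an invertible complex V(F)×V(F) matrix such that M⁻¹P(γ)M is diagonal for every γ ∈ Γ, with diagonal entries λ_{(γ,1)}, …, λ_{(γ,ν_F)} (ν_F = |V(F)|), and M⁻¹A(F)M is diagonal with diagonal entries λ_{(F,1)}, …, λ_{(F,ν_F)}. Then for every complex μ, (M ⊗ I_{V(G)})⁻¹ (A(G×^φF) − μ·D(G×^φF)) (M ⊗ I_{V(G)}) = ⊕_{i=1}^{ν_F} ( (λ_{(F,i)} − rμ)·I_{V(G)} + Σ_{γ∈Γ} λ_{(γ,i)}·A(G_{φ,γ}) − μ·D(G) ), where vertices of G×^φF are indexed by pairs (v,u) with v ∈ V(F), u ∈ V(G). -/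
open Matrix BigOperators Kronecker
open scoped Classical

noncomputable section

variable {α β : Type*}

lemma adj_bundle_eq {α β : Type*} [Fintype α] [Fintype β]
    (G : SimpleGraph α) (F : SimpleGraph β) (φ : α → α → Equiv.Perm β)
    (hsym : ∀ u₁ u₂, G.Adj u₁ u₂ → φ u₂ u₁ = (φ u₁ u₂)⁻¹)
    (Γ : Subgroup (Equiv.Perm β))
    (hφΓ : ∀ u₁ u₂, G.Adj u₁ u₂ → φ u₁ u₂ ∈ Γ) :
    adjM (bundle G F φ hsym) =
      (∑ γ : Γ, permM (γ : Equiv.Perm β) ⊗ₖ voltM G φ (γ : Equiv.Perm β))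
        + adjM F ⊗ₖ (1 : Matrix α α ℂ) := by
  ext ⟨v₁, u₁⟩ ⟨v₂, u₂⟩
  simp only [adjM, permM, voltM, Matrix.add_apply, Matrix.sum_apply, kroneckerMap_apply,
    Matrix.of_apply, Matrix.one_apply, bundle]
  by_cases h : G.Adj u₁ u₂
  · have hne : u₁ ≠ u₂ := G.ne_of_adj h
    rw [Fintype.sum_eq_single (⟨φ u₁ u₂, hφΓ _ _ h⟩ : Γ) ?_]
    · simp [h, hne, eq_comm]
    · intro γ hγ
      have hne' : φ u₁ u₂ ≠ (γ : Equiv.Perm β) := fun he => hγ (Subtype.ext he.symm)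
      simp [hne']
  · rw [Finset.sum_eq_zero ?_]
    · by_cases he : u₁ = u₂ <;> simp [h, he, mul_ite]
    · intro γ _
      simp [h]

lemma bundle_neighborSet {α β : Type*} [Fintype α] [Fintype β]
    (G : SimpleGraph α) (F : SimpleGraph β) (φ : α → α → Equiv.Perm β)
    (hsym : ∀ u₁ u₂, G.Adj u₁ u₂ → φ u₂ u₁ = (φ u₁ u₂)⁻¹) (v : β) (u : α) :
    (bundle G F φ hsym).neighborSet (v, u)
      = (fun x => (φ u x v, x)) '' (G.neighborSet u)
        ∪ (fun w => (w, u)) '' (F.neighborSet v) := by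
  ext ⟨w, x⟩
  simp only [SimpleGraph.mem_neighborSet, bundle, Set.mem_union, Set.mem_image,
    SimpleGraph.mem_neighborSet, Prod.mk.injEq]
  constructor
  · rintro (⟨h1, h2⟩ | ⟨h1, h2⟩)
    · exact Or.inl ⟨x, h1, h2.symm, rfl⟩
    · exact Or.inr ⟨w, h2, rfl, h1⟩
  · rintro (⟨a, ha, h1, rfl⟩ | ⟨b, hb, rfl, rfl⟩)
    · exact Or.inl ⟨ha, h1.symm⟩
    · exact Or.inr ⟨rfl, hb⟩

lemma deg_bundle_eq {α β : Type*} [Fintype α] [Fintype β]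
    (G : SimpleGraph α) (F : SimpleGraph β) (r : ℕ)
    (hreg : ∀ v, (F.neighborSet v).ncard = r)
    (φ : α → α → Equiv.Perm β)
    (hsym : ∀ u₁ u₂, G.Adj u₁ u₂ → φ u₂ u₁ = (φ u₁ u₂)⁻¹) :
    degM (bundle G F φ hsym)
      = (r : ℂ) • (1 : Matrix (β × α) (β × α) ℂ) + (1 : Matrix β β ℂ) ⊗ₖ degM G := by
  have hdeg : ∀ (v : β) (u : α),
      ((bundle G F φ hsym).neighborSet (v, u)).ncard = r + (G.neighborSet u).ncard := by
    intro v u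
    rw [bundle_neighborSet]
    have h1 : ((fun x => (φ u x v, x)) '' (G.neighborSet u)).ncard
        = (G.neighborSet u).ncard :=
      Set.ncard_image_of_injOn (fun a _ b _ hab => congrArg Prod.snd hab)
    have h2 : ((fun w => (w, u)) '' (F.neighborSet v)).ncard = (F.neighborSet v).ncard :=
      Set.ncard_image_of_injOn (fun a _ b _ hab => congrArg Prod.fst hab)
    have hd : Disjoint ((fun x => (φ u x v, x)) '' (G.neighborSet u))
        ((fun w => (w, u)) '' (F.neighborSet v)) := by
      rw [Set.disjoint_left]
      rintro p ⟨a, ha, rfl⟩ ⟨b, hb, hp⟩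
      have hau : u = a := congrArg Prod.snd hp
      subst hau
      exact G.loopless.irrefl _ ha
    rw [Set.ncard_union_eq hd (Set.toFinite _) (Set.toFinite _), h1, h2, hreg, Nat.add_comm]
  ext ⟨v, u⟩ ⟨w, x⟩
  simp only [degM, Matrix.add_apply, Matrix.smul_apply, kroneckerMap_apply, Matrix.one_apply,
    smul_eq_mul, Matrix.diagonal, Matrix.of_apply, Prod.mk.injEq]
  by_cases hv : v = w
  · subst hv
    by_cases hu : u = x
    · subst hu
      simp [hdeg]
    · simp [hu]
  · simp [hv]

theorem bundle_matrix_similarity_abelian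
    {α β : Type*} [Fintype α] [Fintype β]
    (G : SimpleGraph α) (F : SimpleGraph β)
    (r : ℕ) (hreg : ∀ v, (F.neighborSet v).ncard = r)
    (φ : α → α → Equiv.Perm β)
    (hsym : ∀ u₁ u₂, G.Adj u₁ u₂ → φ u₂ u₁ = (φ u₁ u₂)⁻¹)
    (Γ : Subgroup (Equiv.Perm β)) (hΓAut : Γ ≤ autPerm F)
    (hΓab : ∀ γ δ : Γ, γ * δ = δ * γ)
    (hφΓ : ∀ u₁ u₂, G.Adj u₁ u₂ → φ u₁ u₂ ∈ Γ)
    (M : Matrix β β ℂ) (hM : IsUnit M.det)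
    (d : Equiv.Perm β → β → ℂ)
    (hPd : ∀ γ ∈ Γ, M⁻¹ * permM γ * M = Matrix.diagonal (d γ))
    (dF : β → ℂ)
    (hAd : M⁻¹ * adjM F * M = Matrix.diagonal dF)
    (μ : ℂ) :
    (M ⊗ₖ (1 : Matrix α α ℂ))⁻¹
        * (adjM (bundle G F φ hsym) - μ • degM (bundle G F φ hsym))
        * (M ⊗ₖ (1 : Matrix α α ℂ))
      = dsum fun v =>
          (dF v - (r : ℂ) * μ) • (1 : Matrix α α ℂ)
            + ((∑ γ : Γ, d (γ : Equiv.Perm β) v • voltM G φ (γ : Equiv.Perm β))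
                - μ • degM G) := by
  have hMM : M⁻¹ * M = 1 := Matrix.nonsing_inv_mul M hM
  have hNinv : (M ⊗ₖ (1 : Matrix α α ℂ))⁻¹ = M⁻¹ ⊗ₖ (1 : Matrix α α ℂ) := by
    rw [Matrix.inv_kronecker, inv_one]
  have key : ∀ (A : Matrix β β ℂ) (B : Matrix α α ℂ),
      (M⁻¹ ⊗ₖ (1 : Matrix α α ℂ)) * (A ⊗ₖ B) * (M ⊗ₖ (1 : Matrix α α ℂ))
        = (M⁻¹ * A * M) ⊗ₖ B := by
    intro A B
    rw [← Matrix.mul_kronecker_mul, ← Matrix.mul_kronecker_mul, Matrix.one_mul, Matrix.mul_one]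
  rw [adj_bundle_eq G F φ hsym Γ hφΓ, deg_bundle_eq G F r hreg φ hsym, hNinv]
  have hone : (1 : Matrix (β × α) (β × α) ℂ) = (1 : Matrix β β ℂ) ⊗ₖ (1 : Matrix α α ℂ) :=
    (Matrix.one_kronecker_one).symm
  rw [hone]
  simp only [Matrix.mul_sub, Matrix.sub_mul, Matrix.mul_add, Matrix.add_mul,
    Matrix.mul_smul, Matrix.smul_mul, Finset.mul_sum, Finset.sum_mul, key]
  have hd' : ∀ γ : Γ, M⁻¹ * permM (γ : Equiv.Perm β) * M = Matrix.diagonal (d γ) :=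
    fun γ => hPd _ γ.2
  simp only [hd', hAd, Matrix.mul_one, hMM]
  ext ⟨v, u⟩ ⟨w, x⟩
  simp only [dsum, Matrix.sub_apply, Matrix.add_apply, Matrix.smul_apply, Matrix.sum_apply,
    kroneckerMap_apply, Matrix.of_apply, Matrix.one_apply, smul_eq_mul, Matrix.diagonal,
    Prod.mk.injEq]
  by_cases hv : v = w
  · subst hv
    simp only [if_true, eq_self_iff_true, true_and]
    ring
  · simp only [hv, if_false, false_and, if_neg hv]
    simp [hv]


end
end

section
/- Let G be a finite simple graph and F a finite simple graph that is regular of degree r. Then for all complex λ, μ: F_{G□F}(λ,μ) = ∏_{t} F_G(λ + rμ − t, μ), where the product runs over the multiset of roots t (with multiplicity) of the characteristic polynomial of A(F) over ℂ and G□F denotes the Cartesian (box) product of G and F. -/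
open Matrix BigOperators Kronecker
open scoped Classical

noncomputable section

variable {α β : Type*}

section Aux

open Polynomial

variable [Fintype α] [Fintype β]

lemma charmatrix_diagonal' (v : β → ℂ) :
    charmatrix (Matrix.diagonal v) = Matrix.diagonal (fun i => (X : ℂ[X]) - C (v i)) := by
  ext i j
  by_cases h : i = j
  · subst h; simp
  · simp [h, Matrix.diagonal_apply_ne _ h]

lemma charpoly_diagonal' (v : β → ℂ) :
    (Matrix.diagonal v).charpoly
      = ((Finset.univ.val.map v).map fun a => (X : ℂ[X]) - C a).prod := by
  rw [Matrix.charpoly, charmatrix_diagonal', Matrix.det_diagonal, Multiset.map_map]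
  rfl

lemma charpoly_unitary_conj (U D : Matrix β β ℂ) (hU : U * star U = 1)
    (hU' : star U * U = 1) :
    (U * D * star U).charpoly = D.charpoly := by
  have hmap : ∀ (M N : Matrix β β ℂ),
      (M * N).map (C : ℂ →+* ℂ[X]) = M.map C * N.map C := fun M N => by
    simpa using (RingHom.mapMatrix (C : ℂ →+* ℂ[X]) (n := β)).map_mul M N
  have hscalar : ∀ M : Matrix β β ℂ[X],
      Matrix.scalar β (X : ℂ[X]) * M = M * Matrix.scalar β (X : ℂ[X]) := fun M =>
    (Matrix.scalar_commute (X : ℂ[X]) (fun r' => Commute.all _ _) M).eq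
  have hch : charmatrix (U * D * star U)
      = U.map C * charmatrix D * (star U).map C := by
    unfold charmatrix
    simp only [RingHom.mapMatrix_apply]
    rw [Matrix.mul_sub, Matrix.sub_mul, hmap, hmap]
    congr 1
    rw [← hscalar, Matrix.mul_assoc, ← hmap, hU]
    simp
  have hdetU : (U.map (C : ℂ →+* ℂ[X])).det * ((star U).map C).det = 1 := by
    rw [← Matrix.det_mul, ← hmap, hU]
    simp
  rw [Matrix.charpoly, hch, Matrix.det_mul, Matrix.det_mul, Matrix.charpoly,
    mul_comm, ← mul_assoc, mul_comm ((star U).map C).det, hdetU, one_mul]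

lemma roots_charpoly_hermitian (A : Matrix β β ℂ) (hA : A.IsHermitian) :
    A.charpoly.roots = Finset.univ.val.map (fun i => (hA.eigenvalues i : ℂ)) := by
  have hU := (Matrix.mem_unitaryGroup_iff).mp (hA.eigenvectorUnitary).2
  have hU' := (Matrix.mem_unitaryGroup_iff').mp (hA.eigenvectorUnitary).2
  have h1 : A.charpoly = (Matrix.diagonal
      (RCLike.ofReal ∘ hA.eigenvalues : β → ℂ)).charpoly := by
    conv_lhs => rw [hA.spectral_theorem]
    exact charpoly_unitary_conj _ _ hU hU'
  rw [h1, charpoly_diagonal', Polynomial.roots_multiset_prod_X_sub_C]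
  rfl

lemma det_kron_sub (B : Matrix α α ℂ) (A : Matrix β β ℂ) (hA : A.IsHermitian) :
    (B ⊗ₖ 1 - 1 ⊗ₖ A).det
      = ((A.charpoly.roots).map fun t => (B - t • 1).det).prod := by
  have hU := (Matrix.mem_unitaryGroup_iff).mp (hA.eigenvectorUnitary).2
  set U : Matrix β β ℂ := (hA.eigenvectorUnitary : Matrix β β ℂ) with hUdef
  set d : β → ℂ := (RCLike.ofReal ∘ hA.eigenvalues : β → ℂ) with hd
  have hspec : U * Matrix.diagonal d * star U = A := by
    rw [hUdef, hd]; exact hA.spectral_theorem.symm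
  -- conjugation step
  have hconj : (1 ⊗ₖ U) * (B ⊗ₖ 1 - 1 ⊗ₖ Matrix.diagonal d) * (1 ⊗ₖ star U)
      = B ⊗ₖ (1 : Matrix β β ℂ) - 1 ⊗ₖ A := by
    rw [Matrix.mul_sub, Matrix.sub_mul]
    simp only [← Matrix.mul_kronecker_mul, Matrix.one_mul, Matrix.mul_one]
    rw [hU, hspec]
  have hdet1 : ((1 : Matrix α α ℂ) ⊗ₖ U).det * ((1 : Matrix α α ℂ) ⊗ₖ star U).det = 1 := by
    rw [← Matrix.det_mul, ← Matrix.mul_kronecker_mul, Matrix.one_mul, hU,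
      Matrix.one_kronecker_one, Matrix.det_one]
  have hblock : B ⊗ₖ (1 : Matrix β β ℂ) - 1 ⊗ₖ Matrix.diagonal d
      = Matrix.blockDiagonal (fun b => B - d b • 1) := by
    ext ⟨a, b⟩ ⟨a', b'⟩
    by_cases hb : b = b'
    · subst hb
      by_cases ha : a = a' <;>
        simp [Matrix.kroneckerMap_apply, Matrix.blockDiagonal_apply, Matrix.one_apply,
          Matrix.diagonal_apply, ha, Matrix.smul_apply]
    · simp [Matrix.kroneckerMap_apply, Matrix.blockDiagonal_apply, Matrix.one_apply,
        Matrix.diagonal_apply, hb]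
  rw [← hconj, Matrix.det_mul, Matrix.det_mul, mul_comm, ← mul_assoc,
    mul_comm (((1 : Matrix α α ℂ) ⊗ₖ star U).det), hdet1, one_mul, hblock,
    Matrix.det_blockDiagonal, roots_charpoly_hermitian A hA, Multiset.map_map,
    ← Finset.prod_eq_multiset_prod]
  rfl

lemma ncard_neighborSet_eq_degree (G : SimpleGraph α) (v : α) :
    (G.neighborSet v).ncard = G.degree v := by
  rw [Set.ncard_eq_toFinset_card', SimpleGraph.degree]
  congr 1

lemma adjM_isHermitian (F : SimpleGraph β) : (adjM F).IsHermitian := by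
  ext i j
  simp only [adjM, Matrix.conjTranspose_apply, Matrix.of_apply]
  rw [SimpleGraph.adj_comm]
  split <;> simp

end Aux


set_option maxHeartbeats 1600000 in
theorem genCharPoly_of_cartesian_product
    {α β : Type*} [Fintype α] [Fintype β]
    (G : SimpleGraph α) (F : SimpleGraph β)
    (r : ℕ) (hreg : ∀ v, (F.neighborSet v).ncard = r)
    (lam μ : ℂ) :
    Fpoly (G.boxProd F) lam μ
      = (((adjM F).charpoly.roots).map fun t => Fpoly G (lam + (r : ℂ) * μ - t) μ).prod := by
  letI : DecidableEq (α × β) := fun a b => Classical.propDecidable _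
  set B : Matrix α α ℂ := (lam + (r : ℂ) * μ) • 1 - (adjM G - μ • degM G) with hB
  have hdegN : ∀ (a : α) (b : β),
      ((G.boxProd F).neighborSet (a, b)).ncard = (G.neighborSet a).ncard + r := by
    intro a b
    rw [SimpleGraph.neighborSet_boxProd]
    have e1 : G.neighborSet a ×ˢ ({b} : Set β) = (fun x => (x, b)) '' G.neighborSet a := by
      ext ⟨x, y⟩
      simp [eq_comm, and_comm]
    have e2 : ({a} : Set α) ×ˢ F.neighborSet b = (fun y => (a, y)) '' F.neighborSet b := by
      ext ⟨x, y⟩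
      simp [eq_comm, and_comm]
    have hdisj : Disjoint (G.neighborSet a ×ˢ ({b} : Set β))
        (({a} : Set α) ×ˢ F.neighborSet b) := by
      rw [Set.disjoint_left]
      rintro ⟨x, y⟩ h1 h2
      rw [Set.mem_prod] at h1 h2
      obtain ⟨hx, -⟩ := h1
      obtain ⟨hx', -⟩ := h2
      rw [Set.mem_singleton_iff] at hx'
      subst hx'
      exact G.irrefl hx
    rw [Set.ncard_union_eq hdisj (Set.toFinite _) (Set.toFinite _), e1, e2,
      Set.ncard_image_of_injective _ (fun x y h => (Prod.mk.injEq _ _ _ _).mp h |>.1),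
      Set.ncard_image_of_injective _ (fun x y h => (Prod.mk.injEq _ _ _ _).mp h |>.2),
      hreg b]
  have key : lam • (1 : Matrix (α × β) (α × β) ℂ)
      - (adjM (G.boxProd F) - μ • degM (G.boxProd F)) = B ⊗ₖ 1 - 1 ⊗ₖ adjM F := by
    ext ⟨a, b⟩ ⟨a', b'⟩
    simp only [Matrix.sub_apply, Matrix.smul_apply, Matrix.kroneckerMap_apply, hB,
      adjM, degM, Matrix.of_apply, Matrix.diagonal_apply, Matrix.one_apply,
      SimpleGraph.boxProd_adj, smul_eq_mul, Prod.mk.injEq]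
    by_cases ha : a = a' <;> by_cases hb : b = b'
    · subst ha; subst hb
      simp only [SimpleGraph.irrefl, false_and, and_false, or_self, if_false, if_true,
        and_self, true_and, if_pos rfl]
      rw [hdegN a b]
      push_cast
      ring
    · subst ha
      simp only [SimpleGraph.irrefl, false_and, true_and, hb, and_false, false_or,
        if_false, and_self]
      by_cases hF : F.Adj b b' <;> simp [hF, hb]
    · subst hb
      simp only [SimpleGraph.irrefl, and_true, true_and, ha, false_and, or_false,
        if_false, and_false]
      by_cases hG : G.Adj a a' <;> simp [hG, ha]
    · simp [ha, hb]
  unfold Fpoly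
  refine (congrArg Matrix.det key).trans
    (Eq.trans ?_ ((det_kron_sub B (adjM F) (adjM_isHermitian F)).trans ?_))
  · congr!
  refine congrArg Multiset.prod (Multiset.map_congr rfl fun t _ => ?_)
  show (B - t • 1).det = ((lam + (r:ℂ) * μ - t) • 1 - (adjM G - μ • degM G)).det
  rw [hB, sub_smul, sub_right_comm]


end
end

section
/- Let 𝒜 be a finite abelian group of order n. Let G be a finite simple graph and φ a voltage assignment on G with values in 𝒜 (i.e., φ(u₂,u₁) = φ(u₁,u₂)⁻¹ for adjacent pairs), and let G×^φK_n be the graph on V(G)×𝒜 in which (u₁,a) and (u₂,b) are adjacent iff either u₁ and u₂ are adjacent in G and b = φ(u₁,u₂)·a, or u₁ = u₂ and a ≠ b (so the fiber is the complete graph on the n elements of 𝒜). Let χ₁, χ₂, …, χ_n be an enumeration of all group homomorphisms 𝒜 → ℂˣ with χ₁ the trivial one, and for each i let A_{χᵢ} be the V(G)×V(G) matrix whose (u₁,u₂)-entry is χᵢ(φ(u₁,u₂)) if u₁ and u₂ are adjacent in G and 0 otherwise. Then for all complex λ, μ: F_{G×^φK_n}(λ,μ) = F_G(λ + (n−1)(μ−1),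 μ) · ∏_{i=2}^{n} det( (λ + (n−1)μ + 1)·I_{V(G)} − (A_{χᵢ} − μ·D(G)) ). -/
open Matrix BigOperators Kronecker
open scoped Classical

noncomputable section

variable {α β : Type*}

def completeFiberBundle {α A : Type*} [CommGroup A] (G : SimpleGraph α)
    (φ : α → α → A) (hsym : ∀ u₁ u₂, G.Adj u₁ u₂ → φ u₂ u₁ = (φ u₁ u₂)⁻¹) :
    SimpleGraph (α × A) where
  Adj p q := (G.Adj p.1 q.1 ∧ q.2 = φ p.1 q.1 * p.2) ∨ (p.1 = q.1 ∧ p.2 ≠ q.2)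
  symm := by
    constructor
    rintro ⟨u₁, a⟩ ⟨u₂, b⟩ hadj
    dsimp only at hadj ⊢
    rcases hadj with ⟨h, rfl⟩ | ⟨rfl, h⟩
    · left
      refine ⟨h.symm, ?_⟩
      rw [hsym _ _ h]
      exact (inv_mul_cancel_left _ _).symm
    · right
      exact ⟨rfl, h.symm⟩
  loopless := by
    constructor
    rintro ⟨u, a⟩ hadj
    dsimp only at hadj
    rcases hadj with ⟨h, _⟩ | ⟨_, h⟩
    · exact G.loopless.irrefl u h
    · exact h rfl

def charM {α A : Type*} [Fintype α] [CommGroup A] (G : SimpleGraph α)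
    (φ : α → α → A) (χ : A →* ℂˣ) : Matrix α α ℂ :=
  Matrix.of fun u₁ u₂ => if G.Adj u₁ u₂ then (χ (φ u₁ u₂) : ℂ) else 0

set_option linter.unusedSectionVars false

section Aux
variable {A : Type*} [CommGroup A] [Fintype A]

lemma my_sum_char (ψ : A →* ℂˣ) :
    ∑ c : A, (ψ c : ℂ) = if ψ = 1 then (Fintype.card A : ℂ) else 0 := by
  split_ifs with h
  · subst h; simp [Finset.card_univ]
  · obtain ⟨b, hb⟩ : ∃ b, ψ b ≠ 1 := by
      by_contra hall
      push_neg at hall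
      exact h (MonoidHom.ext fun x => by simpa using hall x)
    have key : (ψ b : ℂ) * ∑ c : A, (ψ c : ℂ) = ∑ c : A, (ψ c : ℂ) := by
      rw [Finset.mul_sum]
      refine Fintype.sum_equiv (Equiv.mulLeft b) _ _ fun c => ?_
      simp [← Units.val_mul, ← _root_.map_mul]
    have h2 : ((ψ b : ℂ) - 1) * ∑ c : A, (ψ c : ℂ) = 0 := by
      rw [sub_mul, one_mul, key, sub_self]
    rcases mul_eq_zero.mp h2 with h3 | h3
    · exact absurd (Units.ext (by rw [Units.val_one]; exact sub_eq_zero.mp h3)) hb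
    · exact h3

lemma my_orth (ψ₁ ψ₂ : A →* ℂˣ) :
    ∑ c : A, ((ψ₁ c : ℂ))⁻¹ * (ψ₂ c : ℂ)
      = if ψ₁ = ψ₂ then (Fintype.card A : ℂ) else 0 := by
  have h1 : ∀ c : A, ((ψ₁ c : ℂ))⁻¹ * (ψ₂ c : ℂ) = ((ψ₂ * ψ₁⁻¹) c : ℂ) := by
    intro c
    simp [← Units.val_inv_eq_inv_val, ← Units.val_mul, mul_comm]
  rw [Finset.sum_congr rfl fun c _ => h1 c, my_sum_char]
  congr 1
  exact propext ⟨fun h => (mul_inv_eq_one.mp h).symm, fun h => mul_inv_eq_one.mpr h.symm⟩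

lemma my_inv_sum (ψ : A →* ℂˣ) :
    ∑ c : A, ((ψ c : ℂ))⁻¹ = if ψ = 1 then (Fintype.card A : ℂ) else 0 := by
  have := my_orth ψ 1
  simpa using this

end Aux

section Aux2
variable {α A : Type*} [Fintype α] [CommGroup A] [Fintype A]

lemma my_deg (G : SimpleGraph α) (φ : α → α → A)
    (hsym : ∀ u₁ u₂, G.Adj u₁ u₂ → φ u₂ u₁ = (φ u₁ u₂)⁻¹) (u : α) (a : A) :
    ((completeFiberBundle G φ hsym).neighborSet (u, a)).ncard
      = (G.neighborSet u).ncard + (Fintype.card A - 1) := by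
  have hset : (completeFiberBundle G φ hsym).neighborSet (u, a)
      = ((fun v => (v, φ u v * a)) '' (G.neighborSet u)) ∪ (Prod.mk u '' {a}ᶜ) := by
    ext ⟨v, b⟩
    simp only [SimpleGraph.mem_neighborSet, completeFiberBundle, Set.mem_union, Set.mem_image,
      Set.mem_compl_iff, Set.mem_singleton_iff]
    constructor
    · rintro (⟨h1, rfl⟩ | ⟨rfl, h2⟩)
      · exact Or.inl ⟨v, h1, rfl⟩
      · exact Or.inr ⟨b, fun hh => h2 hh.symm, rfl⟩
    · rintro (⟨w, hw, heq⟩ | ⟨c, hc, heq⟩)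
      · injection heq with h1 h2; subst h1; subst h2; exact Or.inl ⟨hw, rfl⟩
      · injection heq with h1 h2; subst h1; subst h2; exact Or.inr ⟨rfl, fun hh => hc hh.symm⟩
  have hinj1 : Function.Injective (fun v : α => (v, φ u v * a)) :=
    fun x y h => congrArg Prod.fst h
  have hinj2 : Function.Injective (Prod.mk u : A → α × A) := fun x y h => by injection h
  have hdisj : Disjoint ((fun v => (v, φ u v * a)) '' (G.neighborSet u))
      ((Prod.mk u : A → α × A) '' {a}ᶜ) := by
    rw [Set.disjoint_left]
    rintro ⟨v, b⟩ ⟨w, hw, heq⟩ ⟨c, hc, heq2⟩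
    injection heq with h1 h2
    injection heq2 with h3 h4
    subst h1
    subst h3
    exact (G.ne_of_adj hw) rfl
  rw [hset, Set.ncard_union_eq hdisj (Set.toFinite _) (Set.toFinite _),
    Set.ncard_image_of_injective _ hinj1, Set.ncard_image_of_injective _ hinj2]
  congr 1
  rw [Set.ncard_eq_toFinset_card']
  simp [Finset.card_compl]

lemma my_A1 (ψ₁ ψ₂ : A →* ℂˣ) (u v : α) (x : ℂ) :
    ∑ c : A, ∑ d : A, (ψ₁ c : ℂ)⁻¹ * ((if u = v ∧ c = d then x else 0) * (ψ₂ d : ℂ))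
      = if ψ₁ = ψ₂ ∧ u = v then (Fintype.card A : ℂ) * x else 0 := by
  by_cases huv : u = v
  · simp only [huv, true_and, and_true]
    have h1 : ∀ c : A,
        ∑ d : A, (ψ₁ c : ℂ)⁻¹ * ((if c = d then x else 0) * (ψ₂ d : ℂ))
          = (ψ₁ c : ℂ)⁻¹ * (ψ₂ c : ℂ) * x := by
      intro c
      rw [Finset.sum_congr rfl (fun d _ => show (ψ₁ c : ℂ)⁻¹ * ((if c = d then x else 0) * (ψ₂ d : ℂ))
          = if c = d then (ψ₁ c : ℂ)⁻¹ * (ψ₂ d : ℂ) * x else 0 from by split_ifs <;> ring),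
        Finset.sum_ite_eq]
      simp
    rw [Finset.sum_congr rfl fun c _ => h1 c, ← Finset.sum_mul, my_orth]
    split_ifs <;> ring
  · simp [huv]

lemma my_A2 (G : SimpleGraph α) (φ : α → α → A) (ψ₁ ψ₂ : A →* ℂˣ) (u v : α) :
    ∑ c : A, ∑ d : A, (ψ₁ c : ℂ)⁻¹ * ((if G.Adj u v ∧ d = φ u v * c then 1 else 0) * (ψ₂ d : ℂ))
      = if ψ₁ = ψ₂ ∧ G.Adj u v then (Fintype.card A : ℂ) * (ψ₂ (φ u v) : ℂ) else 0 := by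
  by_cases hadj : G.Adj u v
  · have h1 : ∀ c : A,
        ∑ d : A, (ψ₁ c : ℂ)⁻¹ * ((if G.Adj u v ∧ d = φ u v * c then 1 else 0) * (ψ₂ d : ℂ))
          = (ψ₁ c : ℂ)⁻¹ * (ψ₂ c : ℂ) * (ψ₂ (φ u v) : ℂ) := by
      intro c
      rw [Finset.sum_congr rfl (fun d _ =>
        show (ψ₁ c : ℂ)⁻¹ * ((if G.Adj u v ∧ d = φ u v * c then 1 else 0) * (ψ₂ d : ℂ))
          = if d = φ u v * c then (ψ₁ c : ℂ)⁻¹ * (ψ₂ d : ℂ) else 0 from by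
            by_cases hd : d = φ u v * c <;> simp [hd, hadj]),
        Finset.sum_ite_eq']
      simp only [Finset.mem_univ, if_true, _root_.map_mul, Units.val_mul]
      ring
    rw [Finset.sum_congr rfl fun c _ => h1 c, ← Finset.sum_mul, my_orth]
    simp only [hadj, and_true]
    split_ifs <;> ring
  · simp [hadj]

lemma my_A3 (ψ₁ ψ₂ : A →* ℂˣ) (u v : α) :
    ∑ c : A, ∑ d : A, (ψ₁ c : ℂ)⁻¹ * ((if u = v ∧ c ≠ d then 1 else 0) * (ψ₂ d : ℂ))
      = if u = v then
          (if ψ₁ = 1 then (Fintype.card A : ℂ) else 0) * (if ψ₂ = 1 then (Fintype.card A : ℂ) else 0)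
            - (if ψ₁ = ψ₂ then (Fintype.card A : ℂ) else 0)
        else 0 := by
  by_cases huv : u = v
  · simp only [huv, true_and, if_true]
    have h1 : ∀ c d : A, (ψ₁ c : ℂ)⁻¹ * ((if c ≠ d then (1:ℂ) else 0) * (ψ₂ d : ℂ))
        = (ψ₁ c : ℂ)⁻¹ * (ψ₂ d : ℂ) - (ψ₁ c : ℂ)⁻¹ * ((if u = u ∧ c = d then (1:ℂ) else 0) * (ψ₂ d : ℂ)) := by
      intro c d
      by_cases hcd : c = d <;> simp [hcd] <;> ring
    rw [Finset.sum_congr rfl fun c _ => Finset.sum_congr rfl fun d _ => h1 c d]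
    rw [Finset.sum_congr rfl fun c (_ : c ∈ Finset.univ) => Finset.sum_sub_distrib _ _,
      Finset.sum_sub_distrib]
    have h2 := my_A1 ψ₁ ψ₂ u u (1:ℂ)
    rw [h2]
    have h3 : ∑ c : A, ∑ d : A, (ψ₁ c : ℂ)⁻¹ * (ψ₂ d : ℂ)
        = (∑ c : A, (ψ₁ c : ℂ)⁻¹) * (∑ d : A, (ψ₂ d : ℂ)) := by
      rw [Finset.sum_mul_sum]
    rw [h3, my_inv_sum, my_sum_char]
    simp
  · simp [huv]

end Aux2


set_option maxHeartbeats 2000000 in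
theorem genCharPoly_of_complete_fiber_bundle
    {α A : Type*} [Fintype α] [CommGroup A] [Fintype A]
    (n : ℕ) (hcard : Fintype.card A = n) (hn0 : 0 < n)
    (G : SimpleGraph α) (φ : α → α → A)
    (hsym : ∀ u₁ u₂, G.Adj u₁ u₂ → φ u₂ u₁ = (φ u₁ u₂)⁻¹)
    (χ : Fin n → (A →* ℂˣ)) (hχ : Function.Bijective χ)
    (hχ1 : χ ⟨0, hn0⟩ = 1)
    (lam μ : ℂ) :
    Fpoly (completeFiberBundle G φ hsym) lam μ
      = Fpoly G (lam + ((n : ℂ) - 1) * (μ - 1)) μ *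
          ∏ i ∈ Finset.univ.erase ⟨0, hn0⟩,
            Matrix.det
              ((lam + ((n : ℂ) - 1) * μ + 1) • (1 : Matrix α α ℂ)
                - (charM G φ (χ i) - μ • degM G)) := by
  classical
  have hA1 : 1 ≤ Fintype.card A := by rw [hcard]; exact hn0
  have hn : (n : ℂ) ≠ 0 := Nat.cast_ne_zero.mpr hn0.ne'
  set H := completeFiberBundle G φ hsym with hH
  set M : Matrix (α × A) (α × A) ℂ := lam • 1 - (adjM H - μ • degM H) with hM
  have e : A ≃ Fin n := Fintype.equivFinOfCardEq hcard
  set ψ : A → (A →* ℂˣ) := fun a => χ (e a) with hψ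
  have hψinj : Function.Injective ψ := fun a b h => e.injective (hχ.injective h)
  have hpsieq : ∀ a b : A, (ψ a = ψ b) = (a = b) :=
    fun a b => propext ⟨fun h => hψinj h, fun h => h ▸ rfl⟩
  set P : Matrix (α × A) (α × A) ℂ :=
    Matrix.of fun p q => if p.1 = q.1 then ((ψ q.2) p.2 : ℂ) else 0 with hPd
  set Q : Matrix (α × A) (α × A) ℂ :=
    Matrix.of fun p q => if p.1 = q.1 then ((n : ℂ))⁻¹ * (((ψ p.2) q.2 : ℂ))⁻¹ else 0 with hQd
  set Bk : A → Matrix α α ℂ := fun a =>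
    (lam + ((n : ℂ) - 1) * μ - (if ψ a = 1 then (n : ℂ) - 1 else -1)) • (1 : Matrix α α ℂ)
      - (charM G φ (ψ a) - μ • degM G) with hBk
  have hdegc : ∀ (w : α) (c : A),
      ((H.neighborSet (w, c)).ncard : ℂ) = ((G.neighborSet w).ncard : ℂ) + (n : ℂ) - 1 := by
    intro w c
    rw [hH, my_deg G φ hsym w c, Nat.cast_add, Nat.cast_sub hA1, hcard]
    ring
  -- Q * P = 1
  have hQP : Q * P = 1 := by
    ext ⟨u, a⟩ ⟨v, b⟩
    rw [Matrix.mul_apply, Fintype.sum_prod_type, Finset.sum_comm]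
    have hcol : ∀ c : A, ∑ s : α, Q (u, a) (s, c) * P (s, c) (v, b)
        = if u = v then ((n : ℂ))⁻¹ * ((ψ a c : ℂ))⁻¹ * (ψ b c : ℂ) else 0 := by
      intro c
      rw [Finset.sum_congr rfl (fun s _ =>
        show Q (u, a) (s, c) * P (s, c) (v, b)
          = if u = s then (if s = v then ((n:ℂ))⁻¹ * ((ψ a c : ℂ))⁻¹ * (ψ b c : ℂ) else 0) else 0 from by
          simp only [hQd, hPd, Matrix.of_apply]
          split_ifs <;> ring), Finset.sum_ite_eq]
      simp
    rw [Finset.sum_congr rfl fun c _ => hcol c]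
    by_cases huv : u = v
    · simp only [huv, if_true]
      have : ∀ c : A, ((n : ℂ))⁻¹ * ((ψ a c : ℂ))⁻¹ * (ψ b c : ℂ)
          = ((n : ℂ))⁻¹ * (((ψ a c : ℂ))⁻¹ * (ψ b c : ℂ)) := fun c => by ring
      rw [Finset.sum_congr rfl fun c _ => this c, ← Finset.mul_sum, my_orth]
      subst huv
      simp only [hpsieq, hcard]
      by_cases hab : a = b
      · simp [hab, Matrix.one_apply, inv_mul_cancel₀ hn]
      · simp [hab, Matrix.one_apply, Prod.ext_iff]
    · simp [Matrix.one_apply, Prod.ext_iff, huv]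
  -- entry of M
  have hMent : ∀ (u v : α) (c d : A), M (u, c) (v, d) =
      lam * (if u = v ∧ c = d then 1 else 0)
      + μ * (if u = v ∧ c = d then (((G.neighborSet u).ncard : ℂ) + (n : ℂ) - 1) else 0)
      - (if G.Adj u v ∧ d = φ u v * c then 1 else 0)
      - (if u = v ∧ c ≠ d then 1 else 0) := by
    intro u v c d
    have hadjH : H.Adj (u, c) (v, d) ↔ ((G.Adj u v ∧ d = φ u v * c) ∨ (u = v ∧ c ≠ d)) :=
      Iff.rfl
    have hsplit : (if (G.Adj u v ∧ d = φ u v * c) ∨ (u = v ∧ c ≠ d) then (1:ℂ) else 0)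
        = (if G.Adj u v ∧ d = φ u v * c then (1:ℂ) else 0)
          + (if u = v ∧ c ≠ d then (1:ℂ) else 0) := by
      by_cases h1 : G.Adj u v ∧ d = φ u v * c <;> by_cases h2 : u = v ∧ c ≠ d
      · exfalso; obtain ⟨huv, -⟩ := h2; subst huv; exact absurd h1.1 (G.irrefl)
      · rw [if_pos (Or.inl h1), if_pos h1, if_neg h2]; norm_num
      · rw [if_pos (Or.inr h2), if_neg h1, if_pos h2]; norm_num
      · rw [if_neg (by tauto), if_neg h1, if_neg h2]; norm_num
    rw [hM]
    simp only [Matrix.sub_apply, Matrix.smul_apply, Matrix.one_apply, smul_eq_mul, adjM,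
      degM, Matrix.diagonal_apply, Matrix.of_apply, Prod.mk.injEq]
    rw [if_congr hadjH rfl rfl, hsplit, hdegc u c]
    ring
  -- the conjugated matrix is block diagonal
  have hblock : Q * M * P = Matrix.blockDiagonal Bk := by
    ext ⟨u, a⟩ ⟨v, b⟩
    have hMP : ∀ (p : α × A) (d' : A), (M * P) p (v, d') = ∑ d : A, M p (v, d) * ((ψ d') d : ℂ) := by
      intro p d'
      rw [Matrix.mul_apply, Fintype.sum_prod_type, Finset.sum_comm]
      refine Finset.sum_congr rfl fun d _ => ?_
      rw [Finset.sum_congr rfl (fun t _ =>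
        show M p (t, d) * P (t, d) (v, d')
          = if t = v then M p (t, d) * ((ψ d') d : ℂ) else 0 from by
          simp only [hPd, Matrix.of_apply]; split_ifs <;> ring), Finset.sum_ite_eq']
      simp
    have hQMP : (Q * M * P) (u, a) (v, b)
        = (n : ℂ)⁻¹ * ∑ c : A, ∑ d : A, ((ψ a) c : ℂ)⁻¹ * (M (u, c) (v, d) * ((ψ b) d : ℂ)) := by
      rw [Matrix.mul_assoc, Matrix.mul_apply, Fintype.sum_prod_type, Finset.sum_comm]
      have hcol : ∀ c : A, ∑ s : α, Q (u, a) (s, c) * (M * P) (s, c) (v, b)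
          = (n : ℂ)⁻¹ * (((ψ a) c : ℂ))⁻¹ * (M * P) (u, c) (v, b) := by
        intro c
        rw [Finset.sum_congr rfl (fun s _ =>
          show Q (u, a) (s, c) * (M * P) (s, c) (v, b)
            = if u = s then (n:ℂ)⁻¹ * (((ψ a) c : ℂ))⁻¹ * (M * P) (s, c) (v, b) else 0 from by
            simp only [hQd, Matrix.of_apply]; split_ifs <;> ring), Finset.sum_ite_eq]
        simp
      rw [Finset.sum_congr rfl fun c _ => hcol c, Finset.mul_sum]
      refine Finset.sum_congr rfl fun c _ => ?_
      rw [hMP (u, c) b, Finset.mul_sum, Finset.mul_sum]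
      refine Finset.sum_congr rfl fun d _ => ?_
      ring
    rw [hQMP]
    have hsummand : ∀ c d : A, ((ψ a) c : ℂ)⁻¹ * (M (u, c) (v, d) * ((ψ b) d : ℂ))
        = ((ψ a) c : ℂ)⁻¹ * ((if u = v ∧ c = d then lam else 0) * ((ψ b) d : ℂ))
          + ((ψ a) c : ℂ)⁻¹ * ((if u = v ∧ c = d then μ * (((G.neighborSet u).ncard : ℂ) + (n : ℂ) - 1) else 0) * ((ψ b) d : ℂ))
          - ((ψ a) c : ℂ)⁻¹ * ((if G.Adj u v ∧ d = φ u v * c then (1:ℂ) else 0) * ((ψ b) d : ℂ))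
          - ((ψ a) c : ℂ)⁻¹ * ((if u = v ∧ c ≠ d then (1:ℂ) else 0) * ((ψ b) d : ℂ)) := by
      intro c d
      rw [hMent u v c d]
      split_ifs <;> ring
    rw [Finset.sum_congr rfl fun c _ => Finset.sum_congr rfl fun d _ => hsummand c d]
    simp only [Finset.sum_add_distrib, Finset.sum_sub_distrib]
    rw [my_A1 (ψ a) (ψ b) u v lam,
      my_A1 (ψ a) (ψ b) u v (μ * (((G.neighborSet u).ncard : ℂ) + (n : ℂ) - 1)),
      my_A2 G φ (ψ a) (ψ b) u v, my_A3 (ψ a) (ψ b) u v, hcard]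
    simp only [hpsieq]
    rw [Matrix.blockDiagonal_apply]
    have hBkent : ∀ a' : A, Bk a' u v =
        (lam + ((n : ℂ) - 1) * μ - (if ψ a' = 1 then (n : ℂ) - 1 else -1)) * (if u = v then 1 else 0)
          - ((if G.Adj u v then ((ψ a') (φ u v) : ℂ) else 0)
            - μ * (if u = v then ((G.neighborSet u).ncard : ℂ) else 0)) := by
      intro a'
      rw [hBk]
      simp [Matrix.sub_apply, Matrix.smul_apply, Matrix.one_apply, smul_eq_mul, charM, degM,
        Matrix.diagonal_apply, mul_comm]
    by_cases hab : a = b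
    · subst hab
      rw [if_pos rfl, hBkent a]
      by_cases huv : u = v
      · have hnadj : ¬ G.Adj u v := huv ▸ G.irrefl
        by_cases h1 : ψ a = 1
        · simp only [huv, hnadj, h1, if_true, if_false, and_true, true_and, and_false, eq_self_iff_true]
          field_simp
          simp only [G.irrefl, if_false]
          ring
        · simp only [huv, hnadj, h1, if_true, if_false, and_true, true_and, and_false, eq_self_iff_true]
          field_simp
          simp only [G.irrefl, if_false]
          ring
      · by_cases hadj : G.Adj u v
        · by_cases h1 : ψ a = 1 <;>
            simp only [huv, hadj, h1, if_true, if_false, and_true, true_and, and_false,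
              false_and, eq_self_iff_true] <;> field_simp <;> ring
        · by_cases h1 : ψ a = 1 <;>
            simp only [huv, hadj, h1, if_true, if_false, and_true, true_and, and_false,
              false_and, eq_self_iff_true] <;> field_simp <;> ring
    · rw [if_neg hab]
      have h1 : ¬ ((a = b) ∧ u = v) := fun h => hab h.1
      have h2 : ¬ ((a = b) ∧ G.Adj u v) := fun h => hab h.1
      have h3 : ¬ (ψ a = 1 ∧ ψ b = 1) := fun h => hab (hψinj (h.1.trans h.2.symm))
      rw [if_neg h1, if_neg h1, if_neg h2, if_neg hab]
      by_cases huv : u = v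
      · rw [if_pos huv]
        by_cases ha1 : ψ a = 1
        · have hb1 : ψ b ≠ 1 := fun hh => h3 ⟨ha1, hh⟩
          rw [if_pos ha1, if_neg hb1]
          ring
        · rw [if_neg ha1]
          ring
      · rw [if_neg huv]
        ring
  -- determinant computation
  have hdet1 : M.det = ∏ a : A, (Bk a).det := by
    have hQMPdet : (Q * M * P).det = Q.det * M.det * P.det := by
      rw [Matrix.det_mul, Matrix.det_mul]
    have hQPdet : Q.det * P.det = 1 := by
      rw [← Matrix.det_mul, hQP, Matrix.det_one]
    have : M.det = (Q * M * P).det := by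
      rw [hQMPdet]
      linear_combination (-M.det) * hQPdet
    rw [this, hblock, Matrix.det_blockDiagonal]
  have hFH : Fpoly H lam μ = M.det := by
    rw [hM]
    unfold Fpoly
    congr 1
    ext p q
    by_cases hpq : p = q <;>
      simp [Matrix.sub_apply, Matrix.smul_apply, Matrix.one_apply, hpq]
  rw [hFH, hdet1]
  have hprodeq : ∏ a : A, (Bk a).det = ∏ i : Fin n, (Bk (e.symm i)).det := by
    refine Fintype.prod_equiv e _ _ fun a => ?_
    simp
  rw [hprodeq, ← Finset.mul_prod_erase Finset.univ _ (Finset.mem_univ ⟨0, hn0⟩)]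
  congr 1
  · -- trivial character block
    have h0 : ψ (e.symm ⟨0, hn0⟩) = 1 := by
      simp only [hψ, Equiv.apply_symm_apply]
      exact hχ1
    have hch1 : charM G φ (1 : A →* ℂˣ) = adjM G := by
      ext u v
      simp [charM, adjM]
    simp only [hBk, h0, if_true, hch1]
    rw [show lam + ((n : ℂ) - 1) * μ - ((n : ℂ) - 1) = lam + ((n : ℂ) - 1) * (μ - 1) from by ring]
    unfold Fpoly
    rfl
  · refine Finset.prod_congr rfl fun i hi => ?_
    have hine : i ≠ ⟨0, hn0⟩ := (Finset.mem_erase.mp hi).1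
    have hψi : ψ (e.symm i) = χ i := by rw [hψ]; simp only [Equiv.apply_symm_apply]
    have hnt : χ i ≠ 1 := fun hh => hine (hχ.injective (hh.trans hχ1.symm))
    simp only [hBk, hψi]
    rw [if_neg hnt,
      show lam + ((n : ℂ) - 1) * μ - (-1) = lam + ((n : ℂ) - 1) * μ + 1 from by ring]


end
end
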